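/- For every graph G on n vertices, ϑ(G)·ϑ(Ḡ) ≥ n, where ϑ is the Lovász theta number and Ḡ is the complement of G. -/

import Mathlib

open Matrix
open scoped ComplexOrder

/-- The Lovász theta number of a graph: the supremum of ⟨J, X⟩ over positive
semidefinite X with X ∘ A = 0 and tr X = 1. -/
noncomputable def lovaszTheta {n : ℕ} (G : SimpleGraph (Fin n)) : ℝ :=
  sSup {r : ℝ | ∃ X : Matrix (Fin n) (Fin n) ℂ,
    X.PosSemidef ∧ (∀ i j, G.Adj i j → X i j = 0) ∧ Matrix.trace X = 1 ∧
    Matrix.trace ((Matrix.of fun _ _ => (1 : ℂ)) * X) = (r : ℂ)}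

namespace LovaszAux

variable {n : ℕ}

/-- all-ones real matrix -/
noncomputable def Jr (n : ℕ) : Matrix (Fin n) (Fin n) ℝ := Matrix.of fun _ _ => 1

noncomputable def sumAll (M : Matrix (Fin n) (Fin n) ℝ) : ℝ := ∑ i, ∑ j, M i j

def thetaSet (G : SimpleGraph (Fin n)) : Set ℝ :=
  {r : ℝ | ∃ X : Matrix (Fin n) (Fin n) ℂ,
    X.PosSemidef ∧ (∀ i j, G.Adj i j → X i j = 0) ∧ Matrix.trace X = 1 ∧
    Matrix.trace ((Matrix.of fun _ _ => (1 : ℂ)) * X) = (r : ℂ)}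

lemma real_isHermitian {M : Matrix (Fin n) (Fin n) ℝ} (h : ∀ i j, M i j = M j i) :
    M.IsHermitian := by
  ext i j
  simp only [conjTranspose_apply, star_trivial]
  exact h j i

lemma psd_decomp {𝕜 : Type*} [RCLike 𝕜] {M : Matrix (Fin n) (Fin n) 𝕜} (hM : M.PosSemidef) :
    ∃ B : Matrix (Fin n) (Fin n) 𝕜, M = Bᴴ * B := by
  classical
  open scoped MatrixOrder in exact CStarAlgebra.nonneg_iff_eq_star_mul_self.mp hM.nonneg

lemma psd_map {M : Matrix (Fin n) (Fin n) ℝ} (hM : M.PosSemidef) :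
    (M.map (Complex.ofReal)).PosSemidef := by
  obtain ⟨B, rfl⟩ := psd_decomp hM
  have h1 : (Bᴴ * B).map (Complex.ofReal) = (B.map Complex.ofReal)ᴴ * (B.map Complex.ofReal) := by
    rw [← Matrix.conjTranspose_map]
    · exact Matrix.map_mul (f := Complex.ofRealHom)
    · intro x; simp
  rw [h1]
  exact Matrix.posSemidef_conjTranspose_mul_self _

lemma psd_diag_nonneg {M : Matrix (Fin n) (Fin n) ℂ} (hM : M.PosSemidef) (i : Fin n) :
    0 ≤ M i i := by
  have := hM.dotProduct_mulVec_nonneg (Pi.single i 1)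
  simpa [dotProduct, mulVec, Pi.single_apply, Finset.sum_ite_eq, Finset.sum_ite_eq'] using this

lemma psd_trace_nonneg {M : Matrix (Fin n) (Fin n) ℂ} (hM : M.PosSemidef) :
    0 ≤ Matrix.trace M := by
  rw [Matrix.trace]
  exact Finset.sum_nonneg fun i _ => psd_diag_nonneg hM i

lemma psd_trace_mul_nonneg {A B : Matrix (Fin n) (Fin n) ℂ}
    (hA : A.PosSemidef) (hB : B.PosSemidef) : 0 ≤ Matrix.trace (A * B) := by
  obtain ⟨C, rfl⟩ := psd_decomp hA
  rw [Matrix.mul_assoc, Matrix.trace_mul_comm]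
  exact psd_trace_nonneg (hB.mul_mul_conjTranspose_same C)



lemma real_dotProduct_mulVec (M : Matrix (Fin n) (Fin n) ℝ) (x : Fin n → ℝ) :
    dotProduct (star x) (M *ᵥ x) = ∑ i, ∑ j, x i * M i j * x j := by
  simp only [star_trivial, dotProduct, mulVec, Finset.mul_sum]
  exact Finset.sum_congr rfl fun i _ => Finset.sum_congr rfl fun j _ => by ring

lemma trace_ones_mul (X : Matrix (Fin n) (Fin n) ℂ) :
    Matrix.trace ((Matrix.of fun _ _ => (1 : ℂ)) * X) = ∑ i, ∑ j, X i j := by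
  rw [Matrix.trace]
  simp only [Matrix.diag_apply, Matrix.mul_apply, Matrix.of_apply, one_mul]
  rw [Finset.sum_comm]

lemma mem_thetaSet_of_real (G : SimpleGraph (Fin n)) {Y : Matrix (Fin n) (Fin n) ℝ}
    (hY : Y.PosSemidef) (hsupp : ∀ i j, G.Adj i j → Y i j = 0)
    (htr : Matrix.trace Y = 1) : sumAll Y ∈ thetaSet G := by
  refine ⟨Y.map Complex.ofReal, psd_map hY, ?_, ?_, ?_⟩
  · intro i j hij
    simp [Matrix.map_apply, hsupp i j hij]
  · have : Matrix.trace (Y.map Complex.ofReal) = ((Matrix.trace Y : ℝ) : ℂ) := by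
      simp [Matrix.trace, Matrix.map_apply]
    rw [this, htr]; norm_num
  · rw [trace_ones_mul]
    simp only [Matrix.map_apply]
    rw [sumAll]
    push_cast
    rfl

/-- Weak duality. -/
lemma weak_dual (G : SimpleGraph (Fin n)) (t : ℝ) (Z : Matrix (Fin n) (Fin n) ℝ)
    (hZ : ∀ i j, ¬ G.Adj i j → Z i j = 0)
    (hM : (t • (1 : Matrix (Fin n) (Fin n) ℝ) - Jr n + Z).PosSemidef) :
    ∀ r ∈ thetaSet G, r ≤ t := by
  rintro r ⟨X, hX, hsupp, htr, hval⟩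
  set M : Matrix (Fin n) (Fin n) ℝ := t • (1 : Matrix (Fin n) (Fin n) ℝ) - Jr n + Z with hMdef
  have h0 : 0 ≤ Matrix.trace (M.map Complex.ofReal * X) := psd_trace_mul_nonneg (psd_map hM) hX
  have hZX : (∑ i, ∑ j, (Z i j : ℂ) * X j i) = 0 := by
    refine Finset.sum_eq_zero fun i _ => Finset.sum_eq_zero fun j _ => ?_
    by_cases h : G.Adj i j
    · rw [hsupp j i h.symm, mul_zero]
    · rw [hZ i j h]; simp
  have hsum1 : ∀ i, ∑ j, (t:ℂ) * (if i = j then 1 else 0) * X j i = (t:ℂ) * X i i := by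
    intro i
    rw [Finset.sum_eq_single i]
    · simp
    · intro b _ hb; simp [Ne.symm hb]
    · simp
  have hexp : Matrix.trace (M.map Complex.ofReal * X) = (t : ℂ) - (r : ℂ) := by
    have h1 : Matrix.trace (M.map Complex.ofReal * X) = ∑ i, ∑ j, (M i j : ℂ) * X j i := by
      rw [Matrix.trace]
      simp only [Matrix.diag_apply, Matrix.mul_apply, Matrix.map_apply]
    have hMij : ∀ i j, (M i j : ℂ) = (t : ℂ) * (if i = j then 1 else 0) - 1 + (Z i j : ℂ) := by
      intro i j
      by_cases h : i = j <;>
        simp [hMdef, Jr, Matrix.one_apply, h] <;> push_cast <;> ring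
    have h2 : ∑ i, ∑ j, (M i j : ℂ) * X j i
        = (∑ i, ∑ j, (t:ℂ) * (if i = j then 1 else 0) * X j i) - (∑ i, ∑ j, X j i)
          + ∑ i, ∑ j, (Z i j : ℂ) * X j i := by
      rw [← Finset.sum_sub_distrib, ← Finset.sum_add_distrib]
      refine Finset.sum_congr rfl fun i _ => ?_
      rw [← Finset.sum_sub_distrib, ← Finset.sum_add_distrib]
      refine Finset.sum_congr rfl fun j _ => ?_
      rw [hMij]; ring
    have h3 : ∑ i, ∑ j, (X : Matrix (Fin n) (Fin n) ℂ) j i = (r : ℂ) := by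
      rw [Finset.sum_comm, ← trace_ones_mul, hval]
    have h4 : ∑ i, ∑ j, (t:ℂ) * (if i = j then 1 else 0) * X j i = (t : ℂ) := by
      simp only [hsum1, ← Finset.mul_sum]
      rw [show ∑ i, X i i = Matrix.trace X from rfl, htr, mul_one]
    rw [h1, h2, h3, h4, hZX, add_zero]
  rw [hexp, sub_nonneg] at h0
  exact_mod_cast h0


lemma psd_smul {M : Matrix (Fin n) (Fin n) ℝ} (hM : M.PosSemidef) {c : ℝ} (hc : 0 ≤ c) :
    (c • M).PosSemidef := by
  refine Matrix.PosSemidef.of_dotProduct_mulVec_nonneg ?_ fun x => ?_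
  · exact real_isHermitian fun i j => by
      simp only [Matrix.smul_apply, smul_eq_mul]
      have := hM.1
      rw [congrFun (congrFun this.symm i) j]
      simp [conjTranspose_apply]
  · have := hM.dotProduct_mulVec_nonneg x
    rw [real_dotProduct_mulVec] at this ⊢
    simp only [Matrix.smul_apply, smul_eq_mul]
    calc (0:ℝ) ≤ c * ∑ i, ∑ j, x i * M i j * x j := mul_nonneg hc this
    _ = ∑ i, ∑ j, x i * (c * M i j) * x j := by
        rw [Finset.mul_sum]; refine Finset.sum_congr rfl fun i _ => ?_
        rw [Finset.mul_sum]; exact Finset.sum_congr rfl fun j _ => by ring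

lemma psd_add {A B : Matrix (Fin n) (Fin n) ℝ} (hA : A.PosSemidef) (hB : B.PosSemidef) :
    (A + B).PosSemidef := hA.add hB

lemma jr_psd : (Jr n).PosSemidef := by
  refine Matrix.PosSemidef.of_dotProduct_mulVec_nonneg (real_isHermitian fun i j => rfl) fun x => ?_
  rw [real_dotProduct_mulVec]
  have : ∑ i, ∑ j, x i * Jr n i j * x j = (∑ i, x i)^2 := by
    rw [sq, Finset.sum_mul]
    refine Finset.sum_congr rfl fun i _ => ?_
    rw [Finset.mul_sum]
    exact Finset.sum_congr rfl fun j _ => by simp [Jr]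
  rw [this]; positivity

lemma nI_sub_J_psd : ((n : ℝ) • (1 : Matrix (Fin n) (Fin n) ℝ) - Jr n).PosSemidef := by
  refine Matrix.PosSemidef.of_dotProduct_mulVec_nonneg (real_isHermitian fun i j => ?_) fun x => ?_
  · simp [Jr, Matrix.one_apply]
    split_ifs with h h' h' <;> simp_all [eq_comm]
  · rw [real_dotProduct_mulVec]
    have hexp : ∑ i, ∑ j, x i * ((n : ℝ) • (1 : Matrix (Fin n) (Fin n) ℝ) - Jr n) i j * x j
        = (n : ℝ) * ∑ i, x i ^ 2 - (∑ i, x i)^2 := by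
      have : ∀ i j, x i * ((n : ℝ) • (1 : Matrix (Fin n) (Fin n) ℝ) - Jr n) i j * x j
          = (n:ℝ) * (x i * (if i = j then 1 else 0) * x j) - x i * x j := by
        intro i j
        simp only [Matrix.sub_apply, Matrix.smul_apply, Matrix.one_apply, Jr, Matrix.of_apply,
          smul_eq_mul]
        split_ifs <;> ring
      simp only [this]
      rw [show ((n:ℝ) * ∑ i, x i ^ 2 - (∑ i, x i)^2)
          = (∑ i : Fin n, ∑ j : Fin n, (n:ℝ) * ((x i * if i = j then 1 else 0) * x j))
            - ∑ i : Fin n, ∑ j : Fin n, x i * x j from ?_, ← Finset.sum_sub_distrib]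
      · exact Finset.sum_congr rfl fun i _ => Finset.sum_sub_distrib _ _
      congr 1
      · rw [Finset.mul_sum]
        refine Finset.sum_congr rfl fun i _ => ?_
        have h : ∀ j, (n:ℝ) * ((x i * if i = j then 1 else 0) * x j)
            = if i = j then (n:ℝ)*(x i*x j) else 0 := fun j => by split_ifs <;> ring
        simp only [h, Finset.sum_ite_eq, Finset.mem_univ, if_true]
        ring
      · rw [sq, Finset.sum_mul]
        exact Finset.sum_congr rfl fun i _ => by rw [Finset.mul_sum]
    rw [hexp, sub_nonneg]
    calc (∑ i, x i)^2 ≤ (Finset.univ.card : ℝ) * ∑ i, x i ^ 2 := by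
          exact_mod_cast sq_sum_le_card_mul_sum_sq (s := Finset.univ) (f := x)
    _ = (n : ℝ) * ∑ i, x i ^ 2 := by rw [Finset.card_univ, Fintype.card_fin]


lemma bddAbove_thetaSet (G : SimpleGraph (Fin n)) : BddAbove (thetaSet G) := by
  refine ⟨(n : ℝ), fun r hr => ?_⟩
  refine weak_dual G (n : ℝ) 0 (fun i j _ => rfl) ?_ r hr
  rw [add_zero]
  exact nI_sub_J_psd

attribute [local instance] Matrix.normedAddCommGroup Matrix.normedSpace

/-- the feasible spectraplex -/
def Delta (n : ℕ) : Set (Matrix (Fin n) (Fin n) ℝ) :=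
  {X | X.PosSemidef ∧ Matrix.trace X = 1}

lemma delta_psd_quad {X : Matrix (Fin n) (Fin n) ℝ} (hX : X.PosSemidef) (x : Fin n → ℝ) :
    0 ≤ ∑ i, ∑ j, x i * X i j * x j := by
  have := hX.dotProduct_mulVec_nonneg x
  rwa [real_dotProduct_mulVec] at this

lemma real_psd_diag_nonneg {X : Matrix (Fin n) (Fin n) ℝ} (hX : X.PosSemidef) (i : Fin n) :
    0 ≤ X i i := by
  have := hX.dotProduct_mulVec_nonneg (Pi.single i 1)
  simpa [dotProduct, mulVec, Pi.single_apply, Finset.sum_ite_eq, Finset.sum_ite_eq'] using this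

lemma real_psd_diag_le_trace {X : Matrix (Fin n) (Fin n) ℝ} (hX : X.PosSemidef) (i : Fin n) :
    X i i ≤ Matrix.trace X :=
  Finset.single_le_sum (f := fun k => X k k) (fun k _ => real_psd_diag_nonneg hX k)
    (Finset.mem_univ i)

lemma real_psd_entry_sq_le {X : Matrix (Fin n) (Fin n) ℝ} (hX : X.PosSemidef) (i j : Fin n) :
    (X i j)^2 ≤ X i i * X j j := by
  obtain ⟨B, rfl⟩ := psd_decomp hX
  have happ : ∀ k l, (Bᴴ * B) k l = ∑ m, B m k * B m l := by
    intro k l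
    simp [Matrix.mul_apply, Matrix.conjTranspose_apply]
  rw [happ, happ, happ]
  have := Finset.sum_mul_sq_le_sq_mul_sq Finset.univ (fun m => B m i) (fun m => B m j)
  simpa [sq] using this

lemma real_symm_apply {M : Matrix (Fin n) (Fin n) ℝ} (h : M.IsHermitian) (i j : Fin n) :
    M i j = M j i := by
  conv_lhs => rw [← h.eq]
  simp [conjTranspose_apply]

lemma convex_delta : Convex ℝ (Delta n) := by
  rintro X ⟨hX, hXtr⟩ Y ⟨hY, hYtr⟩ a b ha hb hab
  constructor
  · refine Matrix.PosSemidef.of_dotProduct_mulVec_nonneg (real_isHermitian fun i j => ?_) fun x => ?_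
    · simp only [Matrix.add_apply, Matrix.smul_apply, smul_eq_mul]
      rw [real_symm_apply hX.1 i j, real_symm_apply hY.1 i j]
    have h1 := hX.dotProduct_mulVec_nonneg x
    have h2 := hY.dotProduct_mulVec_nonneg x
    have : star x ⬝ᵥ ((a • X + b • Y) *ᵥ x)
        = a * (star x ⬝ᵥ (X *ᵥ x)) + b * (star x ⬝ᵥ (Y *ᵥ x)) := by
      rw [add_mulVec, dotProduct_add, smul_mulVec, smul_mulVec,
        dotProduct_smul, dotProduct_smul, smul_eq_mul, smul_eq_mul]
    rw [this]
    positivity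
  · rw [Matrix.trace_add, Matrix.trace_smul, Matrix.trace_smul, hXtr, hYtr]
    simp [hab]

lemma isCompact_delta : IsCompact (Delta n) := by
  have hclosed : IsClosed (Delta n) := by
    have h1 : IsClosed {X : Matrix (Fin n) (Fin n) ℝ | X.IsHermitian} := by
      have : {X : Matrix (Fin n) (Fin n) ℝ | X.IsHermitian}
          = (fun X : Matrix (Fin n) (Fin n) ℝ => Xᴴ - X) ⁻¹' {0} := by
        ext X
        simp [Matrix.IsHermitian, sub_eq_zero]
      rw [this]
      exact IsClosed.preimage (continuous_id.matrix_conjTranspose.sub continuous_id)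
        isClosed_singleton
    have h2 : IsClosed {X : Matrix (Fin n) (Fin n) ℝ | ∀ x, 0 ≤ dotProduct (star x) (X *ᵥ x)} := by
      have : {X : Matrix (Fin n) (Fin n) ℝ | ∀ x, 0 ≤ dotProduct (star x) (X *ᵥ x)}
          = ⋂ x, {X : Matrix (Fin n) (Fin n) ℝ | 0 ≤ dotProduct (star x) (X *ᵥ x)} := by
        ext; simp
      rw [this]
      refine isClosed_iInter fun x => isClosed_le continuous_const ?_
      exact Continuous.dotProduct continuous_const
        (continuous_id.matrix_mulVec continuous_const)
    have h3 : IsClosed {X : Matrix (Fin n) (Fin n) ℝ | Matrix.trace X = 1} :=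
      isClosed_eq continuous_id.matrix_trace continuous_const
    have heq : Delta n = ({X : Matrix (Fin n) (Fin n) ℝ | X.IsHermitian}
        ∩ {X | ∀ x, 0 ≤ dotProduct (star x) (X *ᵥ x)})
        ∩ {X | Matrix.trace X = 1} := by
      ext X; simp only [Delta, Set.mem_setOf_eq, Set.mem_inter_iff,
        Matrix.posSemidef_iff_dotProduct_mulVec]
    rw [heq]
    exact ((h1.inter h2).inter h3)
  have hbdd : Bornology.IsBounded (Delta n) := by
    refine (Metric.isBounded_iff_subset_closedBall 0).mpr ⟨1, fun X hX => ?_⟩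
    obtain ⟨hpsd, htr⟩ := hX
    rw [Metric.mem_closedBall, dist_zero_right]
    rw [Matrix.norm_le_iff (by norm_num : (0:ℝ) ≤ 1)]
    intro i j
    have hii : X i i ≤ 1 := htr ▸ real_psd_diag_le_trace hpsd i
    have hjj : X j j ≤ 1 := htr ▸ real_psd_diag_le_trace hpsd j
    have hii0 : 0 ≤ X i i := real_psd_diag_nonneg hpsd i
    have hjj0 : 0 ≤ X j j := real_psd_diag_nonneg hpsd j
    have hsq := real_psd_entry_sq_le hpsd i j
    rw [Real.norm_eq_abs, abs_le]
    constructor <;> nlinarith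
  exact Metric.isCompact_of_isClosed_isBounded hclosed hbdd


open scoped Classical in
noncomputable def maskL (G : SimpleGraph (Fin n)) :
    Matrix (Fin n) (Fin n) ℝ →ₗ[ℝ] Matrix (Fin n) (Fin n) ℝ where
  toFun X := Matrix.of fun i j => if G.Adj i j then X i j else 0
  map_add' X Y := by
    ext i j
    simp only [Matrix.of_apply, Matrix.add_apply]
    split_ifs <;> simp
  map_smul' c X := by
    ext i j
    simp only [Matrix.of_apply, Matrix.smul_apply, RingHom.id_apply, smul_eq_mul]
    split_ifs <;> simp

noncomputable def sumL (n : ℕ) : Matrix (Fin n) (Fin n) ℝ →ₗ[ℝ] ℝ where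
  toFun := sumAll
  map_add' X Y := by simp [sumAll, Matrix.add_apply, Finset.sum_add_distrib]
  map_smul' c X := by simp [sumAll, Matrix.smul_apply, Finset.mul_sum]

noncomputable def TL (G : SimpleGraph (Fin n)) :
    Matrix (Fin n) (Fin n) ℝ →ₗ[ℝ] ℝ × Matrix (Fin n) (Fin n) ℝ :=
  (sumL n).prod (maskL G)

lemma lin_expand (g : Matrix (Fin n) (Fin n) ℝ →ₗ[ℝ] ℝ) (X : Matrix (Fin n) (Fin n) ℝ) :
    g X = ∑ i, ∑ j, X i j * g (Matrix.single i j 1) := by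
  conv_lhs => rw [matrix_eq_sum_single X]
  rw [map_sum]
  refine Finset.sum_congr rfl fun i _ => ?_
  rw [map_sum]
  refine Finset.sum_congr rfl fun j _ => ?_
  rw [show Matrix.single i j (X i j) = X i j • Matrix.single i j (1:ℝ) by
    rw [smul_single]; norm_num]
  rw [LinearMap.map_smul, smul_eq_mul]

lemma psd_vecMulVec (x : Fin n → ℝ) : (vecMulVec x x).PosSemidef := by
  have h : vecMulVec x x = (replicateRow Unit x)ᴴ * (replicateRow Unit x) := by
    rw [conjTranspose_replicateRow, show star x = x from funext fun i => star_trivial _,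
      ← vecMulVec_eq Unit]
  rw [h]
  exact posSemidef_conjTranspose_mul_self _

lemma exists_dual_solution (hn : 0 < n) (G : SimpleGraph (Fin n)) (t : ℝ)
    (ht : sSup (thetaSet G) < t) :
    ∃ Z : Matrix (Fin n) (Fin n) ℝ, (∀ i j, ¬ G.Adj i j → Z i j = 0) ∧
      (t • (1 : Matrix (Fin n) (Fin n) ℝ) - Jr n + Z).PosSemidef := by
  classical
  set C : Set (ℝ × Matrix (Fin n) (Fin n) ℝ) := (TL G) '' (Delta n) with hC
  set R : Set (ℝ × Matrix (Fin n) (Fin n) ℝ) :=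
    (Set.Ici t) ×ˢ ({0} : Set (Matrix (Fin n) (Fin n) ℝ)) with hR
  have hTcont : Continuous (TL G) := (TL G).continuous_of_finiteDimensional
  have hCcomp : IsCompact C := isCompact_delta.image hTcont
  have hCconv : Convex ℝ C := convex_delta.linear_image (TL G)
  have hRclosed : IsClosed R := (isClosed_Ici).prod isClosed_singleton
  have hRconv : Convex ℝ R := (convex_Ici t).prod (convex_singleton 0)
  have hdisj : Disjoint C R := by
    rw [Set.disjoint_left]
    rintro ⟨s, W⟩ ⟨X, hXD, hTX⟩ hbR
    have hW0 : W = 0 := (Set.mem_prod.mp hbR).2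
    have hst : t ≤ s := (Set.mem_prod.mp hbR).1
    have h1 : sumAll X = s := congrArg Prod.fst hTX
    have h2 : maskL G X = W := congrArg Prod.snd hTX
    have hsupp : ∀ i j, G.Adj i j → X i j = 0 := by
      intro i j hij
      have := congrFun (congrFun (h2.trans hW0) i) j
      simpa [maskL, hij] using this
    have hmem : sumAll X ∈ thetaSet G := mem_thetaSet_of_real G hXD.1 hsupp hXD.2
    have : sumAll X ≤ sSup (thetaSet G) := le_csSup (bddAbove_thetaSet G) hmem
    rw [h1] at this
    linarith
  haveI : LocallyConvexSpace ℝ (ℝ × Matrix (Fin n) (Fin n) ℝ) :=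
    NormedSpace.toLocallyConvexSpace
  obtain ⟨f, u, v, hfC, huv, hfR⟩ :=
    geometric_hahn_banach_compact_closed hCconv hCcomp hRconv hRclosed hdisj
  set α : ℝ := f (1, 0) with hα
  set ℓ : Matrix (Fin n) (Fin n) ℝ →ₗ[ℝ] ℝ :=
    (f.toLinearMap.comp (LinearMap.inr ℝ ℝ (Matrix (Fin n) (Fin n) ℝ))).comp (maskL G) with hℓ
  have hℓapp : ∀ X, ℓ X = f (0, maskL G X) := fun X => rfl
  have h00 : f ((0:ℝ), (0 : Matrix (Fin n) (Fin n) ℝ)) = 0 := by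
    rw [show ((0:ℝ), (0 : Matrix (Fin n) (Fin n) ℝ)) = (0 : ℝ × Matrix (Fin n) (Fin n) ℝ)
      from rfl, map_zero]
  have hsplit : ∀ (s : ℝ) (W : Matrix (Fin n) (Fin n) ℝ), f (s, W) = s * α + f (0, W) := by
    intro s W
    have heq : (s, W) = s • ((1:ℝ), (0 : Matrix (Fin n) (Fin n) ℝ)) + (0, W) := by
      simp [Prod.ext_iff]
    rw [heq, map_add, f.map_smul, smul_eq_mul]
  have hfTX : ∀ X ∈ Delta n, sumAll X * α + ℓ X < u := by
    intro X hX
    have := hfC _ (Set.mem_image_of_mem _ hX)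
    rwa [show (TL G) X = (sumAll X, maskL G X) from rfl, hsplit, ← hℓapp] at this
  have hvt : v < t * α := by
    have := hfR (t, 0) (Set.mem_prod.mpr ⟨le_refl t, rfl⟩)
    rwa [hsplit, h00, add_zero] at this
  have hα0 : 0 ≤ α := by
    by_contra h
    push_neg at h
    set s : ℝ := max t ((v - 1)/α) with hs
    have h1 : v < f (s, 0) := hfR (s, 0) (Set.mem_prod.mpr ⟨Set.mem_Ici.mpr (le_max_left _ _), rfl⟩)
    rw [hsplit, h00, add_zero] at h1
    have h2 : (v-1)/α ≤ s := le_max_right _ _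
    have h3 : s * α ≤ v - 1 := by
      rw [div_le_iff_of_neg h] at h2
      linarith [h2]
    linarith
  have hmaskdiag : maskL G ((n:ℝ)⁻¹ • (1 : Matrix (Fin n) (Fin n) ℝ)) = 0 := by
    ext i j
    simp only [maskL, LinearMap.coe_mk, AddHom.coe_mk, Matrix.of_apply, Matrix.smul_apply,
      Matrix.zero_apply, smul_eq_mul]
    split_ifs with hadj
    · rw [Matrix.one_apply_ne (G.ne_of_adj hadj), mul_zero]
    · rfl
  have hIsum : sumAll ((n:ℝ)⁻¹ • (1 : Matrix (Fin n) (Fin n) ℝ)) = 1 := by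
    simp only [sumAll, Matrix.smul_apply, Matrix.one_apply, smul_eq_mul]
    rw [show (∑ i : Fin n, ∑ j : Fin n, (n:ℝ)⁻¹ * if i = j then 1 else 0) = ∑ i : Fin n, (n:ℝ)⁻¹
      from Finset.sum_congr rfl fun i _ => by
        simp [Finset.mul_sum, Finset.sum_ite_eq, Finset.mem_univ]]
    rw [Finset.sum_const, Finset.card_univ, Fintype.card_fin, nsmul_eq_mul]
    field_simp
  have hID : ((n:ℝ)⁻¹ • (1 : Matrix (Fin n) (Fin n) ℝ)) ∈ Delta n := by
    constructor
    · exact psd_smul Matrix.PosSemidef.one (by positivity)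
    · rw [Matrix.trace_smul, Matrix.trace_one]
      simp only [smul_eq_mul]
      field_simp
      simp
  have hαpos : 0 < α := by
    rcases lt_or_eq_of_le hα0 with h | h
    · exact h
    · exfalso
      have h1 := hfTX _ hID
      rw [hℓapp, hmaskdiag, h00, ← h, mul_zero, add_zero] at h1
      rw [← h, mul_zero] at hvt
      linarith
  -- the dual matrix Z
  set Z : Matrix (Fin n) (Fin n) ℝ := Matrix.of fun i j =>
    -(ℓ (Matrix.single i j 1) + ℓ (Matrix.single j i 1))/(2*α) with hZ
  have hZsymm : ∀ i j, Z i j = Z j i := by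
    intro i j
    simp only [hZ, Matrix.of_apply]
    rw [add_comm]
  have hZsupp : ∀ i j, ¬ G.Adj i j → Z i j = 0 := by
    intro i j hij
    have hmask : ∀ a b, ¬ G.Adj a b → ℓ (Matrix.single a b 1) = 0 := by
      intro a b hab
      rw [hℓapp]
      have hm0 : maskL G (Matrix.single a b (1:ℝ)) = 0 := by
        ext k l
        simp only [maskL, LinearMap.coe_mk, AddHom.coe_mk, Matrix.of_apply, Matrix.zero_apply]
        split_ifs with hkl
        · rw [Matrix.single]
          simp only [Matrix.of_apply]
          split_ifs with h'
          · exact absurd (h'.1 ▸ h'.2 ▸ hkl) hab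
          · rfl
        · rfl
      rw [hm0, h00]
    simp only [hZ, Matrix.of_apply]
    rw [hmask i j hij, hmask j i (fun h => hij h.symm)]
    norm_num
  refine ⟨Z, hZsupp, ?_⟩
  have hZeval : ∀ X : Matrix (Fin n) (Fin n) ℝ, (∀ i j, X i j = X j i) →
      ∑ i, ∑ j, X i j * Z i j = -(ℓ X)/α := by
    intro X hXs
    have hsum_a : ∑ i, ∑ j, X i j * ℓ (Matrix.single i j 1) = ℓ X := (lin_expand ℓ X).symm
    have hsum_b : ∑ i, ∑ j, X i j * ℓ (Matrix.single j i 1) = ℓ X := by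
      rw [Finset.sum_comm]
      rw [show (∑ j : Fin n, ∑ i : Fin n, X i j * ℓ (Matrix.single j i 1))
          = ∑ j : Fin n, ∑ i : Fin n, X j i * ℓ (Matrix.single j i 1) from
        Finset.sum_congr rfl fun j _ => Finset.sum_congr rfl fun i _ => by rw [hXs i j]]
      exact (lin_expand ℓ X).symm
    have hterm : ∀ i j, X i j * Z i j
        = -(2*α)⁻¹ * (X i j * ℓ (Matrix.single i j 1) + X i j * ℓ (Matrix.single j i 1)) := by
      intro i j
      simp only [hZ, Matrix.of_apply]
      field_simp
    calc ∑ i, ∑ j, X i j * Z i j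
        = ∑ i, ∑ j, (-(2*α)⁻¹ * (X i j * ℓ (Matrix.single i j 1))
            + -(2*α)⁻¹ * (X i j * ℓ (Matrix.single j i 1))) := by
          refine Finset.sum_congr rfl fun i _ => Finset.sum_congr rfl fun j _ => ?_
          rw [hterm i j]; ring
      _ = -(2*α)⁻¹ * (∑ i, ∑ j, X i j * ℓ (Matrix.single i j 1))
            + -(2*α)⁻¹ * (∑ i, ∑ j, X i j * ℓ (Matrix.single j i 1)) := by
          simp only [Finset.sum_add_distrib, Finset.mul_sum]
      _ = -(ℓ X)/α := by
          rw [hsum_a, hsum_b]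
          field_simp
          ring
  -- positive semidefiniteness of the dual slack matrix
  set M : Matrix (Fin n) (Fin n) ℝ := t • (1 : Matrix (Fin n) (Fin n) ℝ) - Jr n + Z with hM
  have hMsymm : M.IsHermitian := by
    refine real_isHermitian fun i j => ?_
    simp only [hM, Matrix.add_apply, Matrix.sub_apply, Matrix.smul_apply, Jr, Matrix.of_apply,
      smul_eq_mul]
    rw [hZsymm i j]
    by_cases h : i = j
    · subst h; rfl
    · rw [Matrix.one_apply_ne h, Matrix.one_apply_ne (Ne.symm h)]
  -- key: strict positivity of the form on Delta
  have hkey : ∀ X ∈ Delta n, (∀ i j, X i j = X j i) → 0 < ∑ i, ∑ j, M i j * X i j := by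
    intro X hXD hXs
    have h1 : sumAll X * α + ℓ X < t * α := by
      have := hfTX X hXD
      linarith
    have h2 : ∑ i, ∑ j, X i j * Z i j = -(ℓ X)/α := hZeval X hXs
    have hMij : ∀ i j, M i j * X i j
        = t * ((if i = j then 1 else 0) * X i j) - X i j + Z i j * X i j := by
      intro i j
      simp only [hM, Matrix.add_apply, Matrix.sub_apply, Matrix.smul_apply, Jr, Matrix.of_apply,
        smul_eq_mul, Matrix.one_apply]
      ring
    have hS1 : ∑ i, ∑ j, t * ((if i = j then 1 else 0) * X i j) = t * Matrix.trace X := by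
      rw [Matrix.trace, Finset.mul_sum]
      refine Finset.sum_congr rfl fun i _ => ?_
      rw [← Finset.mul_sum]
      congr 1
      rw [Finset.sum_eq_single i]
      · simp
      · intro b _ hb; simp [Ne.symm hb]
      · simp
    have hS2 : ∑ i, ∑ j, M i j * X i j
        = t * Matrix.trace X - sumAll X + ∑ i, ∑ j, Z i j * X i j := by
      rw [← hS1]
      rw [show (sumAll X) = ∑ i, ∑ j, X i j from rfl]
      rw [← Finset.sum_sub_distrib, ← Finset.sum_add_distrib]
      refine Finset.sum_congr rfl fun i _ => ?_
      rw [← Finset.sum_sub_distrib, ← Finset.sum_add_distrib]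
      exact Finset.sum_congr rfl fun j _ => hMij i j
    have hZX : ∑ i, ∑ j, Z i j * X i j = -(ℓ X)/α := by
      rw [show (∑ i, ∑ j, Z i j * X i j) = ∑ i, ∑ j, X i j * Z i j from
        Finset.sum_congr rfl fun i _ => Finset.sum_congr rfl fun j _ => mul_comm _ _]
      exact h2
    rw [hS2, hZX, hXD.2, mul_one]
    have h3 : ℓ X / α < t - sumAll X := by
      rw [div_lt_iff₀ hαpos]
      calc ℓ X < t * α - sumAll X * α := by linarith
        _ = (t - sumAll X) * α := by ring
    have : -(ℓ X)/α = -(ℓ X / α) := by ring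
    rw [this]
    linarith
  refine Matrix.PosSemidef.of_dotProduct_mulVec_nonneg hMsymm fun x => ?_
  rcases eq_or_ne x 0 with rfl | hx
  · simp
  · have hs : 0 < ∑ i, x i * x i := by
      obtain ⟨i, hi⟩ := Function.ne_iff.mp hx
      exact Finset.sum_pos' (fun k _ => mul_self_nonneg _)
        ⟨i, Finset.mem_univ i, mul_self_pos.mpr hi⟩
    set s : ℝ := ∑ i, x i * x i with hsdef
    set X : Matrix (Fin n) (Fin n) ℝ := s⁻¹ • vecMulVec x x with hX
    have hXD : X ∈ Delta n := by
      constructor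
      · exact psd_smul (psd_vecMulVec x) (by positivity)
      · rw [Matrix.trace_smul, smul_eq_mul]
        rw [show Matrix.trace (vecMulVec x x) = s from by
          simp [Matrix.trace, Matrix.diag_apply, vecMulVec_apply, hsdef]]
        field_simp
    have hXs : ∀ i j, X i j = X j i := by
      intro i j
      simp only [hX, Matrix.smul_apply, vecMulVec_apply, smul_eq_mul]
      ring
    have hpos := hkey X hXD hXs
    have hform : dotProduct (star x) (M *ᵥ x) = s * ∑ i, ∑ j, M i j * X i j := by
      rw [real_dotProduct_mulVec, Finset.mul_sum]
      refine Finset.sum_congr rfl fun i _ => ?_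
      rw [Finset.mul_sum]
      refine Finset.sum_congr rfl fun j _ => ?_
      simp only [hX, Matrix.smul_apply, vecMulVec_apply, smul_eq_mul]
      field_simp
    rw [hform]
    exact le_of_lt (mul_pos hs hpos)


lemma sumAll_add (A B : Matrix (Fin n) (Fin n) ℝ) : sumAll (A + B) = sumAll A + sumAll B := by
  simp [sumAll, Matrix.add_apply, Finset.sum_add_distrib]

lemma sumAll_smul (c : ℝ) (A : Matrix (Fin n) (Fin n) ℝ) : sumAll (c • A) = c * sumAll A := by
  simp only [sumAll, Matrix.smul_apply, smul_eq_mul, Finset.mul_sum]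

lemma sumAll_inv_smul_one (hn : 0 < n) :
    sumAll ((n:ℝ)⁻¹ • (1 : Matrix (Fin n) (Fin n) ℝ)) = 1 := by
  simp only [sumAll, Matrix.smul_apply, Matrix.one_apply, smul_eq_mul]
  rw [show (∑ i : Fin n, ∑ j : Fin n, (n:ℝ)⁻¹ * if i = j then 1 else 0) = ∑ i : Fin n, (n:ℝ)⁻¹
    from Finset.sum_congr rfl fun i _ => by
      simp [Finset.mul_sum, Finset.sum_ite_eq, Finset.mem_univ]]
  rw [Finset.sum_const, Finset.card_univ, Fintype.card_fin, nsmul_eq_mul]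
  field_simp

lemma one_mem_thetaSet (hn : 0 < n) (G : SimpleGraph (Fin n)) : (1:ℝ) ∈ thetaSet G := by
  have hpsd : ((n:ℝ)⁻¹ • (1 : Matrix (Fin n) (Fin n) ℝ)).PosSemidef :=
    psd_smul Matrix.PosSemidef.one (by positivity)
  have hsupp : ∀ i j, G.Adj i j → ((n:ℝ)⁻¹ • (1 : Matrix (Fin n) (Fin n) ℝ)) i j = 0 := by
    intro i j hij
    simp only [Matrix.smul_apply, smul_eq_mul]
    rw [Matrix.one_apply_ne (G.ne_of_adj hij), mul_zero]
  have htr : Matrix.trace ((n:ℝ)⁻¹ • (1 : Matrix (Fin n) (Fin n) ℝ)) = 1 := by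
    rw [Matrix.trace_smul, Matrix.trace_one]
    simp only [smul_eq_mul]
    field_simp
    simp
  have := mem_thetaSet_of_real G hpsd hsupp htr
  rwa [sumAll_inv_smul_one hn] at this

lemma compl_lower_bound (hn : 0 < n) (G : SimpleGraph (Fin n)) (t : ℝ)
    (ht : sSup (thetaSet G) < t) : (n:ℝ)/t ≤ sSup (thetaSet Gᶜ) := by
  classical
  have ht1 : (1:ℝ) ≤ sSup (thetaSet G) :=
    le_csSup (bddAbove_thetaSet G) (one_mem_thetaSet hn G)
  have ht0 : 0 < t := by linarith
  obtain ⟨Z, hZsupp, hMpsd⟩ := exists_dual_solution hn G t ht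
  set M : Matrix (Fin n) (Fin n) ℝ := t • (1 : Matrix (Fin n) (Fin n) ℝ) - Jr n + Z with hM
  have hMJ : M + Jr n = t • (1 : Matrix (Fin n) (Fin n) ℝ) + Z := by
    rw [hM]; abel
  set Y : Matrix (Fin n) (Fin n) ℝ := (t * n)⁻¹ • (M + Jr n) with hY
  have hYpsd : Y.PosSemidef := psd_smul (hMpsd.add jr_psd) (by positivity)
  have hYsupp : ∀ i j, Gᶜ.Adj i j → Y i j = 0 := by
    intro i j hij
    obtain ⟨hne, hnadj⟩ := hij
    simp only [hY, hMJ, Matrix.smul_apply, Matrix.add_apply, smul_eq_mul]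
    rw [Matrix.one_apply_ne hne, hZsupp i j hnadj]
    ring
  have hZdiag : ∀ i, Z i i = 0 := fun i => hZsupp i i (G.irrefl)
  have htrZ : Matrix.trace Z = 0 := by
    rw [Matrix.trace]
    exact Finset.sum_eq_zero fun i _ => hZdiag i
  have hYtr : Matrix.trace Y = 1 := by
    rw [hY, Matrix.trace_smul, hMJ, Matrix.trace_add, Matrix.trace_smul, Matrix.trace_one,
      htrZ, add_zero, smul_eq_mul, smul_eq_mul]
    field_simp
    simp
  have hmem := mem_thetaSet_of_real Gᶜ hYpsd hYsupp hYtr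
  have hval : (n:ℝ)/t ≤ sumAll Y := by
    have hsumM : 0 ≤ sumAll M := by
      have := hMpsd.dotProduct_mulVec_nonneg (fun _ => (1:ℝ))
      rw [real_dotProduct_mulVec] at this
      simpa [sumAll] using this
    have hsumJ : sumAll (Jr n) = (n:ℝ)^2 := by
      simp [sumAll, Jr, Finset.sum_const, Finset.card_univ]
      ring
    have hsplit : sumAll Y = (t*n)⁻¹ * (sumAll M + sumAll (Jr n)) := by
      rw [hY, sumAll_smul, sumAll_add]
    rw [hsplit, hsumJ]
    have hexp : (t*n)⁻¹ * (sumAll M + (n:ℝ)^2) = sumAll M / (t*n) + (n:ℝ)/t := by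
      field_simp
    rw [hexp]
    have : 0 ≤ sumAll M / (t*n) := by positivity
    linarith
  calc (n:ℝ)/t ≤ sumAll Y := hval
    _ ≤ sSup (thetaSet Gᶜ) := le_csSup (bddAbove_thetaSet Gᶜ) hmem


lemma lovaszTheta_eq (G : SimpleGraph (Fin n)) : lovaszTheta G = sSup (thetaSet G) := rfl

theorem main_ineq {n : ℕ} (G : SimpleGraph (Fin n)) :
    (n : ℝ) ≤ lovaszTheta G * lovaszTheta Gᶜ := by
  rcases Nat.eq_zero_or_pos n with rfl | hn
  · have hempty : ∀ (H : SimpleGraph (Fin 0)), thetaSet H = ∅ := by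
      intro H
      ext r
      simp only [thetaSet, Set.mem_setOf_eq, Set.mem_empty_iff_false, iff_false]
      rintro ⟨X, _, _, htr, _⟩
      have : Matrix.trace X = 0 := by
        simp [Matrix.trace]
      rw [this] at htr
      exact one_ne_zero htr.symm
    rw [lovaszTheta_eq, lovaszTheta_eq, hempty, hempty, Real.sSup_empty]
    norm_num
  · set p : ℝ := lovaszTheta G with hp
    set q : ℝ := lovaszTheta Gᶜ with hq
    have hp1 : (1:ℝ) ≤ p := le_csSup (bddAbove_thetaSet G) (one_mem_thetaSet hn G)
    have hq1 : (1:ℝ) ≤ q := le_csSup (bddAbove_thetaSet Gᶜ) (one_mem_thetaSet hn Gᶜ)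
    have hkey : ∀ t : ℝ, p < t → (n:ℝ)/t ≤ q := fun t ht => compl_lower_bound hn G t ht
    by_contra hcon
    push_neg at hcon
    have hq0 : (0:ℝ) < q := by linarith
    have hpn : p < (n:ℝ)/q := (lt_div_iff₀ hq0).mpr hcon
    set t : ℝ := (p + (n:ℝ)/q)/2 with htdef
    have ht1 : p < t := by rw [htdef]; linarith
    have ht2 : t < (n:ℝ)/q := by rw [htdef]; linarith
    have ht0 : 0 < t := by linarith
    have := hkey t ht1
    rw [div_le_iff₀ ht0] at this
    have : (n:ℝ) ≤ q * t := by linarith [this]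
    have h2 : q * t < q * ((n:ℝ)/q) := by
      exact mul_lt_mul_of_pos_left ht2 hq0
    rw [mul_div_cancel₀ _ (ne_of_gt hq0)] at h2
    linarith

end LovaszAux

/-- For every graph G on n vertices, ϑ(G)·ϑ(Ḡ) ≥ n. -/
theorem lovaszTheta_mul_compl_ge {n : ℕ} (G : SimpleGraph (Fin n)) :
    (n : ℝ) ≤ lovaszTheta G * lovaszTheta Gᶜ :=
  LovaszAux.main_ineq G
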